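/- Suppose the first syzygy of R_S is S-strongly flat and every R-module has S-strongly flat dimension at most 1. Then every submodule of an S-strongly flat R-module is S-strongly flat. -/

import Mathlib

open CategoryTheory

universe u

variable (R : Type u) [CommRing R]

/-- `Ext^n_R(M, N) = 0`. -/
def extVanish (n : ℕ) (M N : Type u) [AddCommGroup M] [Module R M]
    [AddCommGroup N] [Module R N] : Prop :=
  Subsingleton (((Ext R (ModuleCat.{u} R) n).obj
    (Opposite.op (ModuleCat.of R M))).obj (ModuleCat.of R N))

/-- `C` is `S`-weakly cotorsion if `Ext^1_R(R_S, C) = 0`. -/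
def IsWeaklyCotorsion (S : Submonoid R) (C : Type u) [AddCommGroup C] [Module R C] : Prop :=
  extVanish R 1 (Localization S) C

/-- `F` is `S`-strongly flat if `Ext^1_R(F, C) = 0` for all `S`-weakly cotorsion `C`. -/
def IsStronglyFlat (S : Submonoid R) (F : Type u) [AddCommGroup F] [Module R F] : Prop :=
  ∀ (C : Type u) [AddCommGroup C] [Module R C], IsWeaklyCotorsion R S C → extVanish R 1 F C

section AuxOfEpi
open CategoryTheory Limits
variable {C : Type*} [Category C] [Abelian C] [EnoughProjectives C]

namespace CategoryTheory.ProjectiveResolution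
open Projective

/-- Auxiliary complex for `ofEpi`. -/
noncomputable def ofEpiComplex {Z P₀ : C} [Projective P₀] (f : P₀ ⟶ Z) : ChainComplex C ℕ :=
  ChainComplex.mk' P₀ (Projective.syzygies f)
    (Projective.d f) (fun g => ⟨_, Projective.d g, @id (Projective.d g ≫ g = 0) ((Category.assoc (Projective.π (kernel g)) (kernel.ι g) g).trans (by rw [kernel.condition]; exact comp_zero))⟩)

lemma ofEpiComplex_d_1_0 {Z P₀ : C} [Projective P₀] (f : P₀ ⟶ Z) :
    (ofEpiComplex f).d 1 0 = Projective.d f := by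
  simp [ofEpiComplex]

lemma ofEpiComplex_exactAt_succ {Z P₀ : C} [Projective P₀] (f : P₀ ⟶ Z) (n : ℕ) :
    (ofEpiComplex f).ExactAt (n + 1) := by
  rw [HomologicalComplex.exactAt_iff' _ (n + 1 + 1) (n + 1) n (by simp) (by simp)]
  have hx := exact_d_f ((ofEpiComplex f).d (n+1) n)
  dsimp only [ofEpiComplex] at hx ⊢
  refine (ShortComplex.exact_iff_of_iso ?_).1 hx
  refine ShortComplex.isoMk (ChainComplex.mk'XIso P₀ (syzygies f) (d f) (fun g => ⟨_, Projective.d g,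
    @id (Projective.d g ≫ g = 0) ((Category.assoc (Projective.π (kernel g)) (kernel.ι g) g).trans
      (by rw [kernel.condition]; exact comp_zero))⟩) n).symm
    (Iso.refl _) (Iso.refl _) ?_ ?_
  · exact ((Iso.inv_comp_eq _).2 (ChainComplex.mk'_d _ _ _ _ n)).trans (Category.comp_id _).symm
  · exact (Category.id_comp _).trans (Category.comp_id _).symm

instance ofEpiComplex_projective {Z P₀ : C} [Projective P₀] (f : P₀ ⟶ Z) (n : ℕ) :
    Projective ((ofEpiComplex f).X n) := by
  obtain (_ | _ | _ | n) := n <;> first | (dsimp [ofEpiComplex]; infer_instance) | apply Projective.projective_over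

/-- A projective resolution with prescribed zeroth stage. -/
noncomputable def ofEpi {Z P₀ : C} [Projective P₀] (f : P₀ ⟶ Z) [Epi f] : ProjectiveResolution Z where
  complex := ofEpiComplex f
  π := (ChainComplex.toSingle₀Equiv _ _).symm ⟨f, by
          rw [ofEpiComplex_d_1_0]; exact (Category.assoc (Projective.π (kernel f)) (kernel.ι f) f).trans (by rw [kernel.condition]; exact comp_zero)⟩
  quasiIso := ⟨fun n => by
    cases n
    · rw [ChainComplex.quasiIsoAt₀_iff, ShortComplex.quasiIso_iff_of_zeros']
      · refine (ShortComplex.exact_and_epi_g_iff_of_iso ?_).2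
          ⟨exact_d_f f, by dsimp; infer_instance⟩
        exact ShortComplex.isoMk (Iso.refl _) (Iso.refl _) (Iso.refl _)
          (by erw [Category.id_comp, Category.comp_id]; exact (ofEpiComplex_d_1_0 f).symm) (by erw [Category.id_comp, Category.comp_id, ]; exact (ChainComplex.toSingle₀Equiv_symm_apply_f_zero (C := ofEpiComplex f) (X := Z) f _).symm)
      all_goals rfl
    · rw [quasiIsoAt_iff_exactAt']
      · apply ofEpiComplex_exactAt_succ
      · apply ChainComplex.exactAt_succ_single_obj⟩

lemma ofEpi_complex_X_zero {Z P₀ : C} [Projective P₀] (f : P₀ ⟶ Z) [Epi f] :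
    (ofEpi f).complex.X 0 = P₀ := rfl

lemma ofEpi_π_f_zero {Z P₀ : C} [Projective P₀] (f : P₀ ⟶ Z) [Epi f] :
    (ofEpi f).π.f 0 = f := by
  exact ChainComplex.toSingle₀Equiv_symm_apply_f_zero _ _

end CategoryTheory.ProjectiveResolution
variable (R : Type u) [CommRing R]

lemma ModuleCat.subsingleton_iff_isZero (M : ModuleCat.{u} R) :
    Subsingleton M ↔ IsZero M := by
  constructor
  · intro h; exact ModuleCat.isZero_of_subsingleton M
  · intro h
    rw [IsZero.iff_id_eq_zero] at h
    refine ⟨fun a b => ?_⟩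
    have hz : ∀ x : M, x = 0 := fun x => by
      have : (𝟙 M) x = (0 : M ⟶ M) x := by rw [h]
      simpa using this
    rw [hz a, hz b]

lemma subsingleton_ext_iff (X C : ModuleCat.{u} R)
    (P : ProjectiveResolution X) (n : ℕ) :
    Subsingleton (((Ext R (ModuleCat.{u} R) (n+1)).obj (Opposite.op X)).obj C) ↔
    ∀ φ : ↥(LinearMap.range (P.complex.d (n+1) n).hom) →ₗ[R] C,
      ∃ h : P.complex.X n →ₗ[R] C,
        h.comp (Submodule.subtype _) = φ := by
  let K := P.complex.linearYonedaObj R C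
  have h1 : Subsingleton (((Ext R (ModuleCat.{u} R) (n+1)).obj (Opposite.op X)).obj C)
      ↔ Subsingleton (K.homology (n+1)) :=
    Equiv.subsingleton_congr ((forget _).mapIso (P.isoExt (R := R) (n+1) C)).toEquiv
  have hKd : ∀ (m : ℕ) (g : P.complex.X (m+1) ⟶ C),
      K.d (m+1) (m+2) g = P.complex.d (m+2) (m+1) ≫ g := by
    intro m g; simp [K, ChainComplex.linearYonedaObj_d]; rfl
  have hKd' : ∀ (g : P.complex.X n ⟶ C), K.d n (n+1) g = P.complex.d (n+1) n ≫ g := by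
    intro g; simp [K, ChainComplex.linearYonedaObj_d]; rfl
  have h4 : K.ExactAt (n+1) ↔ ∀ (g : P.complex.X (n+1) ⟶ C),
      P.complex.d (n+2) (n+1) ≫ g = 0 →
      ∃ h : P.complex.X n ⟶ C, P.complex.d (n+1) n ≫ h = g := by
    rw [HomologicalComplex.exactAt_iff' K n (n+1) (n+2) (by simp) (by simp),
      ShortComplex.moduleCat_exact_iff]
    constructor
    · intro H g hg
      obtain ⟨h, hh⟩ := H g (by change K.d (n+1) (n+2) g = 0; rw [hKd]; exact hg)
      change K.d n (n+1) h = g at hh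
      erw [hKd'] at hh
      exact ⟨h, hh⟩
    · intro H g hg
      change K.d (n+1) (n+2) g = 0 at hg
      erw [hKd] at hg
      obtain ⟨h, hh⟩ := H g hg
      exact ⟨h, show K.d n (n+1) h = g by erw [hKd']; exact hh⟩
  rw [h1, ModuleCat.subsingleton_iff_isZero, ← HomologicalComplex.exactAt_iff_isZero_homology, h4]
  have hex : LinearMap.range (P.complex.d (n+2) (n+1)).hom = LinearMap.ker (P.complex.d (n+1) n).hom :=
    (ShortComplex.moduleCat_exact_iff_range_eq_ker _).1 (P.exact_succ n)
  constructor
  · intro H φ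
    let g : P.complex.X (n+1) ⟶ C := ModuleCat.ofHom (φ.comp ((P.complex.d (n+1) n).hom.rangeRestrict))
    have hg : P.complex.d (n+2) (n+1) ≫ g = 0 := by
      ext x
      have hdd : (P.complex.d (n+1) n) ((P.complex.d (n+2) (n+1)) x) = 0 := by
        change (P.complex.d (n+2) (n+1) ≫ P.complex.d (n+1) n) x = 0
        rw [P.complex.d_comp_d]
        rfl
      have h0 : ((P.complex.d (n+1) n).hom.rangeRestrict) ((P.complex.d (n+2) (n+1)) x) = 0 := by
        ext; simpa using hdd
      change φ (((P.complex.d (n+1) n).hom.rangeRestrict) ((P.complex.d (n+2) (n+1)) x)) = _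
      rw [h0, map_zero]
      rfl
    obtain ⟨h, hh⟩ := H g hg
    refine ⟨h.hom, ?_⟩
    ext ⟨y, x, rfl⟩
    have := congr_arg (fun k => ModuleCat.Hom.hom k x) hh
    change h ((P.complex.d (n+1) n) x) = φ _ at this ⊢
    exact this
  · intro H g hg
    have hker : LinearMap.ker (P.complex.d (n+1) n).hom
        ≤ LinearMap.ker (show (P.complex.X (n+1) : Type u) →ₗ[R] C from g.hom) := by
      rw [← hex]
      rintro _ ⟨x, rfl⟩
      have := congr_arg (fun k => ModuleCat.Hom.hom k x) hg
      change g ((P.complex.d (n+2) (n+1)) x) = 0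
      simpa using this
    let e := LinearMap.quotKerEquivRange (P.complex.d (n+1) n).hom
    let gbar : (P.complex.X (n+1) ⧸ LinearMap.ker (P.complex.d (n+1) n).hom) →ₗ[R] C :=
      Submodule.liftQ _ g.hom hker
    obtain ⟨h, hh⟩ := H (gbar.comp e.symm.toLinearMap)
    refine ⟨ModuleCat.ofHom h, ?_⟩
    ext x
    change h ((P.complex.d (n+1) n) x) = g x
    have h1' : ((P.complex.d (n+1) n) x) = (Submodule.subtype _) (e (Submodule.Quotient.mk x)) := by
      simp [e, LinearMap.quotKerEquivRange]
    rw [h1', ← LinearMap.comp_apply]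
    have := DFunLike.congr_fun hh (e (Submodule.Quotient.mk x))
    rw [this]
    simp [gbar, e]

variable (R : Type u) [CommRing R] in
lemma extVanish_iff' (M C : Type u) [AddCommGroup M] [Module R M] [AddCommGroup C] [Module R C]
    (P : ProjectiveResolution (ModuleCat.of R M)) (n : ℕ) :
    Subsingleton (((Ext R (ModuleCat.{u} R) (n+1)).obj
      (Opposite.op (ModuleCat.of R M))).obj (ModuleCat.of R C)) ↔
    ∀ φ : ↥(LinearMap.range (P.complex.d (n+1) n).hom) →ₗ[R] C,
      ∃ h : P.complex.X n →ₗ[R] C, h.comp (Submodule.subtype _) = φ :=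
  subsingleton_ext_iff R (ModuleCat.of R M) (ModuleCat.of R C) P n

end AuxOfEpi

open CategoryTheory Limits in
/-- Suppose the first syzygy of `R_S` is `S`-strongly flat and every `R`-module has
`S`-strongly flat dimension at most `1` (i.e. `Ext²_R(M, C) = 0` for all `S`-weakly
cotorsion `C`). Then every submodule of an `S`-strongly flat module is `S`-strongly
flat. -/
theorem submodule_stronglyFlat (S : Submonoid R) (H P : Type u)
    [AddCommGroup H] [Module R H] [AddCommGroup P] [Module R P]
    (i : H →ₗ[R] P) (p : P →ₗ[R] Localization S)
    (hi : Function.Injective i) (hp : Function.Surjective p) (hip : Function.Exact i p)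
    (hP : Module.Projective R P) (hH : IsStronglyFlat R S H)
    (hdim : ∀ (M C : Type u) [AddCommGroup M] [Module R M] [AddCommGroup C] [Module R C],
      IsWeaklyCotorsion R S C → extVanish R 2 M C) :
    ∀ (F : Type u) [AddCommGroup F] [Module R F], IsStronglyFlat R S F →
      ∀ (N : Submodule R F), IsStronglyFlat R S N := by
  intro F _ _ hF N C _ _ hC
  -- resolution of F
  let PF : ProjectiveResolution (ModuleCat.of R F) := ProjectiveResolution.of _
  let P0 : ModuleCat.{u} R := PF.complex.X 0
  let π : P0 →ₗ[R] F := (PF.π.f 0).hom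
  have hπ : Function.Surjective π := by
    have ep : Epi (PF.π.f 0) := inferInstance
    exact (ModuleCat.epi_iff_surjective (PF.π.f 0)).1 ep
  have hK : LinearMap.range (PF.complex.d (0+1) 0).hom = LinearMap.ker π :=
    (ShortComplex.moduleCat_exact_iff_range_eq_ker _).1 PF.exact₀
  -- resolution of Q := F ⧸ N
  let Q := F ⧸ N
  let fQ : P0 →ₗ[R] Q := (N.mkQ).comp π
  haveI : Projective P0 := PF.projective 0
  haveI : Epi (ModuleCat.ofHom fQ) :=
    (ModuleCat.epi_iff_surjective _).2 ((Submodule.mkQ_surjective N).comp hπ)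
  let PQ : ProjectiveResolution (ModuleCat.of R Q) :=
    ProjectiveResolution.ofEpi (ModuleCat.ofHom fQ)
  let P1 : ModuleCat.{u} R := PQ.complex.X 1
  let θ : P1 →ₗ[R] P0 := (PQ.complex.d 1 0).hom
  have hθrange : LinearMap.range θ = Submodule.comap π N := by
    have h1 : LinearMap.range (PQ.complex.d 1 0).hom = LinearMap.ker (PQ.π.f 0).hom :=
      (ShortComplex.moduleCat_exact_iff_range_eq_ker _).1 PQ.exact₀
    rw [ProjectiveResolution.ofEpi_π_f_zero] at h1
    refine h1.trans ?_
    ext x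
    show fQ x = 0 ↔ π x ∈ N
    exact Submodule.Quotient.mk_eq_zero N
  -- extension property for F (from hF)
  have hFext := (extVanish_iff' R F C PF 0).1 (hF C hC)
  rw [hK] at hFext
  -- extension property for Q (from hdim)
  have hQext := (extVanish_iff' R Q C PQ 1).1 (hdim Q C hC)
  have hM : LinearMap.range (PQ.complex.d (1+1) 1).hom = LinearMap.ker θ :=
    (ShortComplex.moduleCat_exact_iff_range_eq_ker _).1 (PQ.exact_succ 0)
  rw [hM] at hQext
  -- resolution of N
  have hθN : ∀ x : P1, π (θ x) ∈ N := fun x => by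
    have hx : θ x ∈ LinearMap.range θ := ⟨x, rfl⟩
    rw [hθrange] at hx
    exact hx
  let ρ : P1 →ₗ[R] ↥N := LinearMap.codRestrict N (π.comp θ) hθN
  have hρval : ∀ x : P1, ((ρ x : ↥N) : F) = π (θ x) := fun x => rfl
  have hρsurj : Function.Surjective ρ := by
    rintro ⟨n, hn⟩
    obtain ⟨x, hx⟩ := hπ n
    have hxN : x ∈ LinearMap.range θ := by
      rw [hθrange]
      show π x ∈ N
      rw [hx]; exact hn
    obtain ⟨y, hy⟩ := hxN
    exact ⟨y, Subtype.ext (by rw [hρval, hy, hx])⟩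
  haveI : Projective P1 := PQ.projective 1
  haveI : Epi (ModuleCat.ofHom ρ) := (ModuleCat.epi_iff_surjective _).2 hρsurj
  let PN : ProjectiveResolution (ModuleCat.of R ↥N) :=
    ProjectiveResolution.ofEpi (ModuleCat.ofHom ρ)
  refine (extVanish_iff' R (↥N) C PN 0).2 ?_
  have hL : LinearMap.range (PN.complex.d (0+1) 0).hom = LinearMap.ker ρ := by
    have h1 : LinearMap.range (PN.complex.d 1 0).hom = LinearMap.ker (PN.π.f 0).hom :=
      (ShortComplex.moduleCat_exact_iff_range_eq_ker _).1 PN.exact₀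
    rw [ProjectiveResolution.ofEpi_π_f_zero] at h1
    exact h1
  rw [hL]
  show ∀ φ : ↥(LinearMap.ker ρ) →ₗ[R] C, ∃ h : ↑P1 →ₗ[R] C, h.comp (LinearMap.ker ρ).subtype = φ
  intro φ
  -- step 1 : extend φ restricted to ker θ to g : P1 →ₗ C
  have hML : LinearMap.ker θ ≤ LinearMap.ker ρ := fun x hx => by
    have hx' : θ x = 0 := hx
    show ρ x = 0
    apply Subtype.ext
    rw [hρval, hx', map_zero]
    rfl
  obtain ⟨g, hg⟩ := hQext (φ.comp (Submodule.inclusion hML))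
  have hgval : ∀ (y : ↑P1) (hy : y ∈ LinearMap.ker θ), g y = φ ⟨y, hML hy⟩ := by
    intro y hy
    have h2 := DFunLike.congr_fun hg (⟨y, hy⟩ : ↥(LinearMap.ker θ))
    simpa [Submodule.inclusion_apply] using h2
  -- step 2 : ψ := φ - g vanishes on ker θ
  let gL : ↥(LinearMap.ker ρ) →ₗ[R] C := g.comp (Submodule.subtype (LinearMap.ker ρ))

  let ψ : ↥(LinearMap.ker ρ) →ₗ[R] C := Sub.sub φ gL
  have hψval : ∀ x : ↥(LinearMap.ker ρ), ψ x = φ x - g x.1 := fun x => rfl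
  have hψM : ∀ x : ↥(LinearMap.ker ρ), θ x.1 = 0 → ψ x = 0 := fun x hx => by
    rw [hψval, hgval x.1 hx]
    have hxx : (⟨x.1, hML hx⟩ : ↥(LinearMap.ker ρ)) = x := Subtype.ext rfl
    rw [hxx, sub_self]
  -- step 3 : factor ψ through K = ker π
  have hθK : ∀ x : ↥(LinearMap.ker ρ), θ x.1 ∈ LinearMap.ker π := fun x => by
    have hx : ρ x.1 = 0 := x.2
    show π (θ x.1) = 0
    rw [← hρval, hx]
    rfl
  let θL : ↥(LinearMap.ker ρ) →ₗ[R] ↥(LinearMap.ker π) :=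
    LinearMap.codRestrict _ (θ.comp (Submodule.subtype _)) hθK
  have hθLval : ∀ x : ↥(LinearMap.ker ρ), ((θL x : ↥(LinearMap.ker π)) : P0) = θ x.1 :=
    fun x => rfl
  have hθLsurj : Function.Surjective θL := by
    rintro ⟨k, hk⟩
    have hk2 : k ∈ LinearMap.range θ := by
      rw [hθrange]
      show π k ∈ N
      rw [(hk : π k = 0)]
      exact N.zero_mem
    obtain ⟨y, hy⟩ := hk2
    have hyL : y ∈ LinearMap.ker ρ := by
      show ρ y = 0
      apply Subtype.ext
      rw [hρval, hy]
      exact hk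
    exact ⟨⟨y, hyL⟩, Subtype.ext (by rw [hθLval]; exact hy)⟩
  have hkerθL : ∀ x ∈ LinearMap.ker θL, ψ x = 0 := fun x hx =>
    hψM x (by rw [← hθLval x, (hx : θL x = 0)]; rfl)
  let eq2 := LinearMap.quotKerEquivOfSurjective θL hθLsurj
  let ψbar : (↥(LinearMap.ker ρ) ⧸ LinearMap.ker θL) →ₗ[R] C :=
    Submodule.liftQ (LinearMap.ker θL) ψ hkerθL
  let φ' : ↥(LinearMap.ker π) →ₗ[R] C := ψbar.comp eq2.symm.toLinearMap
  have hφ' : ∀ x : ↥(LinearMap.ker ρ), φ' (θL x) = ψ x := fun x => by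
    have h1 : eq2 (Submodule.Quotient.mk x) = θL x := by
      simp [eq2, LinearMap.quotKerEquivOfSurjective, LinearMap.quotKerEquivRange]
    show ψbar (eq2.symm (θL x)) = ψ x
    rw [← h1, LinearEquiv.symm_apply_apply]
    exact Submodule.liftQ_apply _ _ _
  -- step 4 : extend φ' to P0
  obtain ⟨Φ, hΦ⟩ := hFext φ'
  -- step 5 : conclude
  refine ⟨(show ↑P1 →ₗ[R] C from Φ.comp θ) + g, ?_⟩
  ext x
  show Φ (θ x.1) + g x.1 = φ x
  have h1 : Φ (θ x.1) = φ' (θL x) := by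
    have h2 := DFunLike.congr_fun hΦ (θL x)
    have h3 : (LinearMap.ker π).subtype (θL x) = θ x.1 := hθLval x
    calc Φ (θ x.1) = Φ ((LinearMap.ker π).subtype (θL x)) := by rw [h3]
    _ = φ' (θL x) := h2
  rw [h1, hφ' x, hψval x]
  exact sub_add_cancel _ _
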